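/- Let \ell > 0 and b \ne 0 be integers satisfying \ell^2 + 4b \ge 0, and define the sequence s by s_0 = 0, s_1 = 1, s_j = \ell s_{j-1} + b s_{j-2} for j \ge 2. Set r = \gcd(\ell, b), t = \gcd(\ell^2/r, b/r), and \sigma = r/t, and define h_n = s_n / (t^{n-1} \sigma^{\lfloor n/2 \rfloor}) for n \ge 1. Then h_n tends to infinity: for every B > 0 there exists a positive integer n_0 such that h_n > B for all n \ge n_0. -/

import Mathlib

set_option maxHeartbeats 2000000 in
/-- With `ℓ > 0`, `b ≠ 0`, `ℓ² + 4b ≥ 0`, `s` as usual,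
`r = gcd(ℓ, b)`, `t = gcd(ℓ²/r, b/r)`, `σ = r/t`, and `hₙ = sₙ/(t^(n-1) σ^⌊n/2⌋)`:
for every `B > 0` there is a positive integer `n₀` with `hₙ > B` for all `n ≥ n₀`. -/
theorem stmt13 (ℓ b : ℤ) (hℓ : 0 < ℓ) (hb : b ≠ 0) (hD : 0 ≤ ℓ ^ 2 + 4 * b)
    (s : ℕ → ℤ) (hs0 : s 0 = 0) (hs1 : s 1 = 1)
    (hrec : ∀ j, 2 ≤ j → s j = ℓ * s (j - 1) + b * s (j - 2))
    (r t σ : ℤ) (hr : r = Int.gcd ℓ b) (ht : t = Int.gcd (ℓ ^ 2 / r) (b / r))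
    (hσ : σ = r / t) :
    ∀ B : ℝ, 0 < B → ∃ n₀ : ℕ, 1 ≤ n₀ ∧ ∀ n, n₀ ≤ n →
      B < (s n : ℝ) / ((t : ℝ) ^ (n - 1) * (σ : ℝ) ^ (n / 2)) := by
  -- basic integer arithmetic facts
  have hgcdpos : 0 < Int.gcd ℓ b := Int.gcd_pos_iff.mpr (Or.inl hℓ.ne')
  have hr0 : 0 < r := by rw [hr]; exact_mod_cast hgcdpos
  have hrl : r ∣ ℓ := by rw [hr]; exact Int.gcd_dvd_left _ _
  have hrb : r ∣ b := by rw [hr]; exact Int.gcd_dvd_right _ _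
  set a : ℤ := ℓ / r with ha
  have hal : ℓ = r * a := by rw [ha, Int.mul_ediv_cancel' hrl]
  have ha0 : a ≠ 0 := by
    intro h; rw [h, mul_zero] at hal; exact hℓ.ne' hal
  have hl2r : ℓ ^ 2 / r = r * a ^ 2 := by
    rw [hal]
    rw [show (r * a) ^ 2 = r * (r * a ^ 2) by ring]
    rw [Int.mul_ediv_cancel_left _ hr0.ne']
  have hcop : Int.gcd a (b / r) = 1 := by
    rw [ha, hr]; exact Int.gcd_div_gcd_div_gcd hgcdpos
  have htl : t ∣ ℓ ^ 2 / r := by rw [ht]; exact Int.gcd_dvd_left _ _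
  have htb : t ∣ b / r := by rw [ht]; exact Int.gcd_dvd_right _ _
  have ht0 : 0 < t := by
    rw [ht]
    have : ℓ ^ 2 / r ≠ 0 := by rw [hl2r]; positivity
    exact_mod_cast Int.gcd_pos_iff.mpr (Or.inl this)
  -- t ∣ r
  have hcta : IsCoprime t a := by
    have h1 : IsCoprime a (b / r) := Int.isCoprime_iff_gcd_eq_one.mpr hcop
    exact IsCoprime.of_isCoprime_of_dvd_left h1.symm htb
  have htr : t ∣ r := by
    have h2 : IsCoprime t (a ^ 2) := hcta.pow_right
    exact h2.dvd_of_dvd_mul_right (hl2r ▸ htl)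
  have hσt : σ * t = r := by rw [hσ]; exact Int.ediv_mul_cancel htr
  have hσ0 : 0 < σ := by
    rcases htr with ⟨c, hc⟩
    have : σ = c := by
      rw [hσ, hc, Int.mul_ediv_cancel_left _ ht0.ne']
    rw [this]
    nlinarith [hc ▸ hr0]
  have hrtb : r * t ∣ b := by
    obtain ⟨m, hm⟩ := htb
    exact ⟨m, by rw [mul_assoc, ← hm, Int.mul_ediv_cancel' hrb]⟩
  -- recurrence restated
  have hrec' : ∀ n : ℕ, s (n + 2) = ℓ * s (n + 1) + b * s n := by
    intro n
    have := hrec (n + 2) (by omega)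
    simpa using this
  -- key inequality: s n ≥ 0 and 2^(n+1) s(n+1) ≥ 2^n ℓ s n + 2 ℓ^n
  have key : ∀ n : ℕ, 0 ≤ s n ∧ 2 ^ (n + 1) * s (n + 1) ≥ 2 ^ n * ℓ * s n + 2 * ℓ ^ n := by
    intro n
    induction n with
    | zero => simp [hs0, hs1]
    | succ n ih =>
      obtain ⟨h0, h1⟩ := ih
      have h2n : (0:ℤ) < 2 ^ n := by positivity
      have hln : (0:ℤ) < ℓ ^ n := by positivity
      simp only [pow_succ] at h1 ⊢
      have hs1pos : 0 < s (n + 1) := by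
        nlinarith [mul_nonneg (mul_nonneg h2n.le hℓ.le) h0]
      refine ⟨hs1pos.le, ?_⟩
      rw [hrec' n]
      have e1 : ℓ * (2 ^ n * 2 * s (n + 1)) ≥ ℓ * (2 ^ n * ℓ * s n + 2 * ℓ ^ n) :=
        mul_le_mul_of_nonneg_left h1 hℓ.le
      have e2 : (0:ℤ) ≤ 2 ^ n * s n * (ℓ ^ 2 + 4 * b) := mul_nonneg (mul_nonneg h2n.le h0) hD
      nlinarith [e1, e2]
  have hsnn : ∀ n : ℕ, 0 ≤ s n := fun n => (key n).1
  -- s(n+1) ≥ (n+1) (ℓ/2)^n, in integer form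
  have lower : ∀ n : ℕ, 2 ^ n * s (n + 1) ≥ (n + 1 : ℤ) * ℓ ^ n := by
    intro n
    induction n with
    | zero => simp [hs1]
    | succ n ih =>
      have h1 := (key (n + 1)).2
      have hln : (0:ℤ) < ℓ ^ n := by positivity
      have e1 : ℓ * (2 ^ n * s (n + 1)) ≥ ℓ * ((n + 1 : ℤ) * ℓ ^ n) :=
        mul_le_mul_of_nonneg_left ih hℓ.le
      simp only [pow_succ] at h1 ⊢
      push_cast
      nlinarith [e1, h1]
  clear key
  -- positivity of the denominator (real)
  have htR : (1:ℝ) ≤ (t:ℝ) := by exact_mod_cast ht0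
  have hσR : (1:ℝ) ≤ (σ:ℝ) := by exact_mod_cast hσ0
  have hrR : (0:ℝ) < (r:ℝ) := by exact_mod_cast hr0
  have hdenpos : ∀ n : ℕ, (0:ℝ) < (t : ℝ) ^ (n - 1) * (σ : ℝ) ^ (n / 2) := by
    intro n; positivity
  -- denominator bound: d n ≤ (t*r)^(n/2) for n ≥ 1
  have dbound : ∀ n : ℕ, 1 ≤ n →
      (t : ℝ) ^ (n - 1) * (σ : ℝ) ^ (n / 2) ≤ ((t:ℝ) * r) ^ (n / 2) := by
    intro n hn
    obtain ⟨e, he1, he2⟩ : ∃ e, n - 1 = e + n / 2 ∧ e ≤ n / 2 :=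
      ⟨(n - 1) - n / 2, by omega, by omega⟩
    have hR : ((t:ℝ) * σ) = (r:ℝ) := by
      rw [← hσt]; push_cast; ring
    calc (t : ℝ) ^ (n - 1) * (σ : ℝ) ^ (n / 2)
        = (t:ℝ) ^ e * ((t:ℝ) * σ) ^ (n / 2) := by
          rw [he1, pow_add, mul_pow]; ring
      _ ≤ (t:ℝ) ^ (n / 2) * ((t:ℝ) * σ) ^ (n / 2) := by
          have h1 := pow_le_pow_right₀ htR he2
          have hpos : (0:ℝ) < ((t:ℝ) * σ) ^ (n / 2) := by positivity
          exact mul_le_mul_of_nonneg_right h1 hpos.le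
      _ = ((t:ℝ) * r) ^ (n / 2) := by rw [hR, ← mul_pow]
  intro B hB
  rcases lt_or_gt_of_ne hb with hbneg | hbpos
  · -- b < 0 : use s n ≥ n (ℓ/2)^(n-1) and t*r ≤ (ℓ/2)^2
    have h4 : 4 * (r * t) ≤ ℓ ^ 2 := by
      have : r * t ∣ -b := Dvd.dvd.neg_right hrtb
      have h1 : r * t ≤ -b := Int.le_of_dvd (by omega) this
      omega
    have hl2 : 2 ≤ ℓ := by nlinarith [hr0, ht0]
    have hl2R : (1:ℝ) ≤ (ℓ:ℝ) / 2 := by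
      have : (2:ℝ) ≤ (ℓ:ℝ) := by exact_mod_cast hl2
      linarith
    refine ⟨⌈B * ℓ / 2⌉₊ + 1, by omega, fun n hn => ?_⟩
    have hn1 : 1 ≤ n := by omega
    rw [lt_div_iff₀ (hdenpos n)]
    have hnB : B * ℓ / 2 < (n : ℝ) := by
      calc B * ℓ / 2 ≤ (⌈B * ℓ / 2⌉₊ : ℝ) := Nat.le_ceil _
        _ < (n : ℝ) := by exact_mod_cast by omega
    -- s n ≥ n * (ℓ/2)^(n-1)
    have hsn : (n : ℝ) * ((ℓ:ℝ)/2) ^ (n - 1) ≤ (s n : ℝ) := by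
      obtain ⟨m, hm⟩ : ∃ m, n = m + 1 := ⟨n - 1, by omega⟩
      subst hm
      have := lower m
      have hcast : ((m:ℝ) + 1) * (ℓ:ℝ) ^ m ≤ 2 ^ m * (s (m+1) : ℝ) := by exact_mod_cast this
      have h2m : (0:ℝ) < 2 ^ m := by positivity
      rw [show m + 1 - 1 = m from rfl, div_pow]
      push_cast
      rw [mul_div_assoc', div_le_iff₀ h2m]
      nlinarith [hcast]
    -- denominator ≤ (ℓ/2)^n
    have hden : (t : ℝ) ^ (n - 1) * (σ : ℝ) ^ (n / 2) ≤ ((ℓ:ℝ)/2) ^ n := by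
      refine le_trans (dbound n hn1) ?_
      have h1 : ((t:ℝ) * r) ≤ ((ℓ:ℝ)/2) ^ 2 := by
        have h4R : (4:ℝ) * ((r:ℝ) * t) ≤ (ℓ:ℝ) ^ 2 := by exact_mod_cast h4
        rw [div_pow, le_div_iff₀ (by norm_num : (0:ℝ) < 2 ^ 2)]
        nlinarith [h4R]
      have h2 : ((t:ℝ) * r) ^ (n/2) ≤ (((ℓ:ℝ)/2) ^ 2) ^ (n/2) := by
        apply pow_le_pow_left₀ (by positivity) h1
      refine le_trans h2 ?_
      rw [← pow_mul]
      exact pow_le_pow_right₀ hl2R (by omega)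
    calc B * ((t : ℝ) ^ (n - 1) * (σ : ℝ) ^ (n / 2))
        ≤ B * ((ℓ:ℝ)/2) ^ n := by
          exact mul_le_mul_of_nonneg_left hden hB.le
      _ = (B * ℓ / 2) * ((ℓ:ℝ)/2) ^ (n - 1) := by
          obtain ⟨m, hm⟩ : ∃ m, n = m + 1 := ⟨n - 1, by omega⟩
          subst hm
          rw [show m + 1 - 1 = m from rfl, pow_succ]
          ring
      _ < (n : ℝ) * ((ℓ:ℝ)/2) ^ (n - 1) := by
          apply mul_lt_mul_of_pos_right hnB
          positivity
      _ ≤ (s n : ℝ) := hsn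
  · -- b > 0
    have hmono : ∀ n : ℕ, ℓ * s n ≤ s (n + 1) := by
      intro n
      cases n with
      | zero => simp [hs0, hs1]
      | succ m =>
        rw [hrec' m]
        nlinarith [hsnn m]
    have htwo : ∀ n : ℕ, (ℓ ^ 2 + b) * s n ≤ s (n + 2) := by
      intro n
      rw [hrec' n]
      have := hmono n
      nlinarith [hsnn n]
    set c : ℤ := r * t with hc
    have hc1 : 1 ≤ c := by nlinarith [hr0, ht0]
    have hcb : c ≤ b := Int.le_of_dvd hbpos hrtb
    have hMc : c + 1 ≤ ℓ ^ 2 + b := by nlinarith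
    -- chain: s (2k+1) ≥ (ℓ²+b)^k and s (2k+2) ≥ (ℓ²+b)^k
    have chain : ∀ k : ℕ, (ℓ ^ 2 + b) ^ k ≤ s (2 * k + 1) ∧ (ℓ ^ 2 + b) ^ k ≤ s (2 * k + 2) := by
      intro k
      induction k with
      | zero =>
        have hs2 : s 2 = ℓ := by
          have h := hrec' 0
          rw [hs0, hs1] at h
          simpa using h
        constructor
        · simp [hs1]
        · show (ℓ ^ 2 + b) ^ 0 ≤ s 2
          rw [pow_zero, hs2]; omega
      | succ k ih =>
        obtain ⟨ih1, ih2⟩ := ih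
        have hM0 : (0:ℤ) < ℓ ^ 2 + b := by nlinarith
        constructor
        · have h := htwo (2 * k + 1)
          have : (ℓ ^ 2 + b) * (ℓ ^ 2 + b) ^ k ≤ (ℓ ^ 2 + b) * s (2 * k + 1) :=
            mul_le_mul_of_nonneg_left ih1 hM0.le
          calc (ℓ ^ 2 + b) ^ (k + 1) = (ℓ ^ 2 + b) * (ℓ ^ 2 + b) ^ k := by ring
            _ ≤ (ℓ ^ 2 + b) * s (2 * k + 1) := this
            _ ≤ s (2 * k + 1 + 2) := h
            _ = s (2 * (k+1) + 1) := by ring_nf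
        · have h := htwo (2 * k + 2)
          have : (ℓ ^ 2 + b) * (ℓ ^ 2 + b) ^ k ≤ (ℓ ^ 2 + b) * s (2 * k + 2) :=
            mul_le_mul_of_nonneg_left ih2 hM0.le
          calc (ℓ ^ 2 + b) ^ (k + 1) = (ℓ ^ 2 + b) * (ℓ ^ 2 + b) ^ k := by ring
            _ ≤ (ℓ ^ 2 + b) * s (2 * k + 2) := this
            _ ≤ s (2 * k + 2 + 2) := h
            _ = s (2 * (k+1) + 2) := by ring_nf
    have slow : ∀ n : ℕ, 1 ≤ n → (ℓ ^ 2 + b) ^ ((n - 1) / 2) ≤ s n := by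
      intro n hn
      rcases Nat.even_or_odd n with he | ho
      · obtain ⟨k, hk⟩ := he
        obtain ⟨k', hk'⟩ : ∃ k', n = 2 * k' + 2 := ⟨k - 1, by omega⟩
        have : (n - 1) / 2 = k' := by omega
        rw [this, hk']
        exact (chain k').2
      · obtain ⟨k, hk⟩ := ho
        have : (n - 1) / 2 = k := by omega
        rw [this, hk]
        exact (chain k).1
    -- real setup
    have hcR : (1:ℝ) ≤ (c:ℝ) := by exact_mod_cast hc1
    have hcR0 : (0:ℝ) < (c:ℝ) := by linarith
    set x : ℝ := ((c:ℝ) + 1) / c with hx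
    have hx1 : 1 < x := by
      rw [hx, lt_div_iff₀ hcR0]; linarith
    obtain ⟨k₀, hk₀⟩ := pow_unbounded_of_one_lt (B * c) hx1
    refine ⟨2 * k₀ + 1, by omega, fun n hn => ?_⟩
    have hn1 : 1 ≤ n := by omega
    rw [lt_div_iff₀ (hdenpos n)]
    set k := (n - 1) / 2 with hk
    have hkk : k₀ ≤ k := by omega
    have hxk : B * c < x ^ k := lt_of_lt_of_le hk₀ (pow_le_pow_right₀ hx1.le hkk)
    -- s n ≥ (c+1)^k
    have hsn : ((c:ℝ) + 1) ^ k ≤ (s n : ℝ) := by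
      have h1 : (c + 1 : ℤ) ^ k ≤ (ℓ ^ 2 + b) ^ k :=
        pow_le_pow_left₀ (by linarith) hMc k
      have h2 := slow n hn1
      have : (c + 1 : ℤ) ^ k ≤ s n := le_trans h1 h2
      exact_mod_cast this
    -- denominator ≤ c^(k+1)
    have hden : (t : ℝ) ^ (n - 1) * (σ : ℝ) ^ (n / 2) ≤ (c:ℝ) ^ (k + 1) := by
      refine le_trans (dbound n hn1) ?_
      have he : ((t:ℝ) * r) = (c:ℝ) := by push_cast [hc]; ring
      rw [he]
      exact pow_le_pow_right₀ hcR (by omega)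
    calc B * ((t : ℝ) ^ (n - 1) * (σ : ℝ) ^ (n / 2))
        ≤ B * (c:ℝ) ^ (k + 1) := mul_le_mul_of_nonneg_left hden hB.le
      _ = (B * c) * (c:ℝ) ^ k := by ring
      _ < x ^ k * (c:ℝ) ^ k := by
          apply mul_lt_mul_of_pos_right hxk
          positivity
      _ = ((c:ℝ) + 1) ^ k := by
          rw [← mul_pow, hx, div_mul_cancel₀]
          exact hcR0.ne'
      _ ≤ (s n : ℝ) := hsn
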